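/- Let A be a ring, Γ a finite group acting on A by automorphisms, and V any A-module. The irreducible quotients of the Γ⋉A-module Ind_A^{Γ⋉A} V are exactly the irreducible direct summands of the modules Ind_A^{Γ⋉A} Q, where Q runs over the irreducible quotient A-modules of V. -/

import Mathlib

/-!
STATEMENT 13: Let A be a ring, Γ a finite group acting on A by automorphisms, and V
any A-module.  The irreducible quotients of the Γ⋉A-module Ind_A^{Γ⋉A} V are exactly
the irreducible direct summands of the modules Ind_A^{Γ⋉A} Q, where Q = V/m runs over
the irreducible quotient A-modules of V.  Crossed product and induced modules are
axiomatized by their basis decompositions.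
-/

universe u

open Finset

/-- Crossed product setting. -/
structure CPSetting (A A' Γ : Type u) [Ring A] [Ring A'] [Algebra ℂ A] [Algebra ℂ A']
    [Group Γ] [Fintype Γ] where
  ψ : Γ →* RingAut A
  ι : A →ₐ[ℂ] A'
  g : Γ →* A'ˣ
  hrel : ∀ (γ : Γ) (a : A), (g γ : A') * ι a = ι (ψ γ a) * (g γ : A')
  hbasis : ∀ x : A', ∃! c : Γ → A, x = ∑ γ : Γ, ι (c γ) * (g γ : A')

namespace CPSetting

variable {A A' Γ : Type u} [Ring A] [Ring A'] [Algebra ℂ A] [Algebra ℂ A']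
  [Group Γ] [Fintype Γ] (S : CPSetting A A' Γ)

lemma psi_cancel (γ : Γ) (a : A) : S.ψ γ (S.ψ γ⁻¹ a) = a := by
  rw [map_inv]; exact (S.ψ γ).apply_symm_apply a

lemma psi_cancel' (γ : Γ) (a : A) : S.ψ γ⁻¹ (S.ψ γ a) = a := by
  rw [map_inv]; exact (S.ψ γ).symm_apply_apply a

lemma comm' (γ : Γ) (a : A) : (S.ι a) * (S.g γ : A') = (S.g γ : A') * S.ι (S.ψ γ⁻¹ a) := by
  rw [S.hrel γ (S.ψ γ⁻¹ a), S.psi_cancel]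

lemma g_inv (γ : Γ) : ((S.g γ)⁻¹ : A'ˣ) = S.g γ⁻¹ := by
  rw [← map_inv]

lemma g_mul_smul {M : Type u} [AddCommGroup M] [Module A' M] (δ γ : Γ) (x : M) :
    (S.g δ : A') • (S.g γ : A') • x = (S.g (δ * γ) : A') • x := by
  rw [smul_smul, ← Units.val_mul, ← map_mul]

lemma g_smul_injective {M : Type u} [AddCommGroup M] [Module A' M] (γ : Γ) {x y : M}
    (h : (S.g γ : A') • x = (S.g γ : A') • y) : x = y := by
  have key : ∀ z : M, (((S.g γ)⁻¹ : A'ˣ) : A') • ((S.g γ : A') • z) = z := fun z => by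
    rw [smul_smul, Units.inv_mul, one_smul]
  rw [← key x, ← key y, h]

lemma g_cancel {M : Type u} [AddCommGroup M] [Module A' M] (γ : Γ) (x : M) :
    (S.g γ : A') • (S.g γ⁻¹ : A') • x = x := by
  rw [S.g_mul_smul, mul_inv_cancel, map_one, Units.val_one, one_smul]

lemma g_cancel' {M : Type u} [AddCommGroup M] [Module A' M] (γ : Γ) (x : M) :
    (S.g γ⁻¹ : A') • (S.g γ : A') • x = x := by
  rw [S.g_mul_smul, inv_mul_cancel, map_one, Units.val_one, one_smul]

/-- Master induction: a predicate closed under `0`, `+`, `ι a •` and `g γ •` is closed under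
arbitrary scalars from `A'`. -/
lemma smul_induction {M : Type u} [AddCommGroup M] [Module A' M] (P : M → Prop)
    (h0 : P 0) (hadd : ∀ x y, P x → P y → P (x + y))
    (hι : ∀ (a : A) (x : M), P x → P (S.ι a • x))
    (hg : ∀ (γ : Γ) (x : M), P x → P ((S.g γ : A') • x)) :
    ∀ (a' : A') (x : M), P x → P (a' • x) := by
  intro a' x hx
  obtain ⟨c, hc, -⟩ := S.hbasis a'
  have : a' • x = ∑ γ : Γ, S.ι (c γ) • ((S.g γ : A') • x) := by
    rw [hc, Finset.sum_smul]
    exact Finset.sum_congr rfl fun γ _ => by rw [mul_smul]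
  rw [this]
  exact Finset.sum_induction _ P hadd h0 fun γ _ => hι _ _ (hg _ _ hx)

/-- Master equivariance: an additive map commuting with `ι a •` and `g γ •` is `A'`-linear. -/
lemma map_smul_of {M N : Type u} [AddCommGroup M] [Module A' M] [AddCommGroup N] [Module A' N]
    (f : M →+ N)
    (hι : ∀ (a : A) (x : M), f (S.ι a • x) = S.ι a • f x)
    (hg : ∀ (γ : Γ) (x : M), f ((S.g γ : A') • x) = (S.g γ : A') • f x) :
    ∀ (a' : A') (x : M), f (a' • x) = a' • f x := by
  intro a' x
  obtain ⟨c, hc, -⟩ := S.hbasis a'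
  have h1 : a' • x = ∑ γ : Γ, S.ι (c γ) • ((S.g γ : A') • x) := by
    rw [hc, Finset.sum_smul]
    exact Finset.sum_congr rfl fun γ _ => by rw [mul_smul]
  have h2 : a' • f x = ∑ γ : Γ, S.ι (c γ) • ((S.g γ : A') • f x) := by
    rw [hc, Finset.sum_smul]
    exact Finset.sum_congr rfl fun γ _ => by rw [mul_smul]
  rw [h1, h2, map_sum]
  exact Finset.sum_congr rfl fun γ _ => by rw [hι, hg]

end CPSetting

section B
variable {A A' Γ : Type u} [Ring A] [Ring A'] [Algebra ℂ A] [Algebra ℂ A']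
  [Group Γ] [Fintype Γ]

/-- Data of an induced module. -/
structure IndData (S : CPSetting A A' Γ) (Q IQ : Type u) [AddCommGroup Q] [Module A Q]
    [AddCommGroup IQ] [Module A' IQ] where
  emb : Q →+ IQ
  hemb : ∀ (a : A) (q : Q), emb (a • q) = S.ι a • emb q
  hb : ∀ x : IQ, ∃! c : Γ → Q, x = ∑ γ : Γ, (S.g γ : A') • emb (c γ)

namespace IndData

variable {S : CPSetting A A' Γ} {Q IQ : Type u} [AddCommGroup Q] [Module A Q]
  [AddCommGroup IQ] [Module A' IQ] (D : IndData S Q IQ)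

lemma unique {x : IQ} {c d : Γ → Q} (hc : x = ∑ γ : Γ, (S.g γ : A') • D.emb (c γ))
    (hd : x = ∑ γ : Γ, (S.g γ : A') • D.emb (d γ)) : c = d := by
  obtain ⟨e, -, hu⟩ := D.hb x
  rw [hu c hc, hu d hd]

lemma sum_add (c d : Γ → Q) :
    (∑ γ : Γ, (S.g γ : A') • D.emb (c γ)) + (∑ γ : Γ, (S.g γ : A') • D.emb (d γ))
      = ∑ γ : Γ, (S.g γ : A') • D.emb (c γ + d γ) := by
  rw [← Finset.sum_add_distrib]
  exact Finset.sum_congr rfl fun γ _ => by rw [map_add, smul_add]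

lemma smul_ι_sum (a : A) (c : Γ → Q) :
    S.ι a • (∑ γ : Γ, (S.g γ : A') • D.emb (c γ))
      = ∑ γ : Γ, (S.g γ : A') • D.emb (S.ψ γ⁻¹ a • c γ) := by
  rw [Finset.smul_sum]
  refine Finset.sum_congr rfl fun γ _ => ?_
  rw [D.hemb, smul_smul, smul_smul, S.comm' γ a]

lemma smul_g_sum (δ : Γ) (c : Γ → Q) :
    (S.g δ : A') • (∑ γ : Γ, (S.g γ : A') • D.emb (c γ))
      = ∑ γ : Γ, (S.g γ : A') • D.emb (c (δ⁻¹ * γ)) := by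
  rw [Finset.smul_sum]
  refine Fintype.sum_equiv (Equiv.mulLeft δ) _ _ fun γ => ?_
  rw [S.g_mul_smul, Equiv.coe_mulLeft, inv_mul_cancel_left]

lemma single_sum [DecidableEq Γ] (q : Q) :
    ∑ γ : Γ, (S.g γ : A') • D.emb ((Pi.single (1 : Γ) q : Γ → Q) γ) = D.emb q := by
  rw [Finset.sum_eq_single (1 : Γ)]
  · rw [Pi.single_eq_same, map_one, Units.val_one, one_smul]
  · intro γ _ hγ
    rw [Pi.single_eq_of_ne hγ, map_zero, smul_zero]
  · intro h; exact absurd (Finset.mem_univ 1) h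

lemma emb_injective : Function.Injective D.emb := by
  classical
  intro q q' h
  have h1 : D.emb q = ∑ γ : Γ, (S.g γ : A') • D.emb ((Pi.single (1 : Γ) q : Γ → Q) γ) :=
    (D.single_sum q).symm
  have h2 : D.emb q = ∑ γ : Γ, (S.g γ : A') • D.emb ((Pi.single (1 : Γ) q' : Γ → Q) γ) := by
    rw [h]; exact (D.single_sum q').symm
  have := D.unique h1 h2
  have := congrFun this (1 : Γ)
  simpa using this

end IndData
end B
section C
variable {A A' Γ : Type u} [Ring A] [Ring A'] [Algebra ℂ A] [Algebra ℂ A']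
  [Group Γ] [Fintype Γ]
  {S : CPSetting A A' Γ} {Q IQ : Type u} [AddCommGroup Q] [Module A Q]
  [AddCommGroup IQ] [Module A' IQ] (D : IndData S Q IQ)

namespace IndData

/-- The chosen basis decomposition of an element of the induced module. -/
noncomputable def dec (x : IQ) : Γ → Q := (D.hb x).exists.choose

lemma dec_spec (x : IQ) : x = ∑ γ : Γ, (S.g γ : A') • D.emb (D.dec x γ) :=
  (D.hb x).exists.choose_spec

lemma dec_eq {x : IQ} {c : Γ → Q} (hc : x = ∑ γ : Γ, (S.g γ : A') • D.emb (c γ)) :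
    D.dec x = c :=
  D.unique (D.dec_spec x) hc

/-- Frobenius reciprocity: an `A`-linear map `Q → N` induces an `A'`-linear map `IQ → N`. -/
noncomputable def induce (N : Type u) [AddCommGroup N] [Module A' N] [Module A N]
    (hcomp : ∀ (a : A) (x : N), a • x = S.ι a • x) (φ : Q →ₗ[A] N) : IQ →ₗ[A'] N := by
  classical
  let t : IQ → N := fun x => ∑ γ : Γ, (S.g γ : A') • φ (D.dec x γ)
  have key : ∀ (x : IQ) (c : Γ → Q), x = ∑ γ : Γ, (S.g γ : A') • D.emb (c γ) →
      t x = ∑ γ : Γ, (S.g γ : A') • φ (c γ) := by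
    intro x c hc
    simp only [t, D.dec_eq hc]
  have hadd : ∀ x y : IQ, t (x + y) = t x + t y := by
    intro x y
    have hxy : x + y = ∑ γ : Γ, (S.g γ : A') • D.emb (D.dec x γ + D.dec y γ) := by
      rw [← D.sum_add, ← D.dec_spec, ← D.dec_spec]
    rw [key _ _ hxy]
    simp only [map_add, smul_add, Finset.sum_add_distrib, t]
  let T : IQ →+ N := AddMonoidHom.mk' t hadd
  have hι : ∀ (a : A) (x : IQ), T (S.ι a • x) = S.ι a • T x := by
    intro a x
    have hx : S.ι a • x = ∑ γ : Γ, (S.g γ : A') • D.emb (S.ψ γ⁻¹ a • D.dec x γ) := by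
      conv_lhs => rw [D.dec_spec x]
      exact D.smul_ι_sum a (D.dec x)
    show t _ = S.ι a • t x
    rw [key _ _ hx, Finset.smul_sum]
    refine Finset.sum_congr rfl fun γ _ => ?_
    rw [map_smul, hcomp, smul_smul, smul_smul, S.comm' γ a]
  have hg : ∀ (δ : Γ) (x : IQ), T ((S.g δ : A') • x) = (S.g δ : A') • T x := by
    intro δ x
    have hx : (S.g δ : A') • x = ∑ γ : Γ, (S.g γ : A') • D.emb (D.dec x (δ⁻¹ * γ)) := by
      conv_lhs => rw [D.dec_spec x]
      exact D.smul_g_sum δ (D.dec x)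
    show t _ = (S.g δ : A') • t x
    rw [key _ _ hx, Finset.smul_sum]
    refine Fintype.sum_equiv (Equiv.mulLeft δ⁻¹) _ _ fun γ => ?_
    rw [Equiv.coe_mulLeft, S.g_mul_smul, mul_inv_cancel_left]
  exact
    { toFun := t
      map_add' := hadd
      map_smul' := fun a' x => S.map_smul_of T hι hg a' x }

lemma induce_emb (N : Type u) [AddCommGroup N] [Module A' N] [Module A N]
    (hcomp : ∀ (a : A) (x : N), a • x = S.ι a • x) (φ : Q →ₗ[A] N) (q : Q) :
    D.induce N hcomp φ (D.emb q) = φ q := by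
  classical
  have hx : D.emb q = ∑ γ : Γ, (S.g γ : A') • D.emb ((Pi.single (1 : Γ) q : Γ → Q) γ) :=
    (D.single_sum q).symm
  show ∑ γ : Γ, (S.g γ : A') • φ (D.dec (D.emb q) γ) = φ q
  rw [D.dec_eq hx, Finset.sum_eq_single (1 : Γ)]
  · rw [Pi.single_eq_same, map_one, Units.val_one, one_smul]
  · intro γ _ hγ
    rw [Pi.single_eq_of_ne hγ, map_zero, smul_zero]
  · intro h; exact absurd (Finset.mem_univ 1) h

end IndData
end C
section D
variable {A A' Γ : Type u} [Ring A] [Ring A'] [Algebra ℂ A] [Algebra ℂ A']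
  [Group Γ] [Fintype Γ]
  {S : CPSetting A A' Γ} {Q IQ : Type u} [AddCommGroup Q] [Module A Q]
  [AddCommGroup IQ] [Module A' IQ] (D : IndData S Q IQ)

namespace IndData

include D in
/-- The induced module of a simple module is semisimple over the base ring `A`. -/
lemma isSemisimpleA [Module A IQ] (hcomp : ∀ (a : A) (x : IQ), a • x = S.ι a • x)
    (hQ : IsSimpleModule A Q) : IsSemisimpleModule A IQ := by
  have smul_mem_aux : ∀ (γ : Γ) (a : A) (q : Q),
      a • ((S.g γ : A') • D.emb q) = (S.g γ : A') • D.emb (S.ψ γ⁻¹ a • q) := by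
    intro γ a q
    rw [hcomp, D.hemb, smul_smul, smul_smul, S.comm' γ a]
  let U : Γ → Submodule A IQ := fun γ =>
    { carrier := Set.range fun q : Q => (S.g γ : A') • D.emb q
      add_mem' := by
        rintro x y ⟨q, rfl⟩ ⟨q', rfl⟩
        exact ⟨q + q', by simp [map_add, smul_add]⟩
      zero_mem' := ⟨0, by simp⟩
      smul_mem' := by
        rintro a x ⟨q, rfl⟩
        exact ⟨S.ψ γ⁻¹ a • q, (smul_mem_aux γ a q).symm⟩ }
  have hmem : ∀ (γ : Γ) (x : IQ), x ∈ U γ ↔ ∃ q : Q, (S.g γ : A') • D.emb q = x :=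
    fun γ x => Iff.rfl
  have hne : ∀ (γ : Γ) (q : Q), (S.g γ : A') • D.emb q = 0 → q = 0 := by
    intro γ q h
    have : (S.g γ : A') • D.emb q = (S.g γ : A') • D.emb 0 := by
      rw [map_zero, smul_zero, h]
    exact D.emb_injective (S.g_smul_injective γ this)
  have hatom : ∀ γ : Γ, IsAtom (U γ) := by
    intro γ
    haveI := IsSimpleModule.nontrivial A Q
    constructor
    · intro hbot
      obtain ⟨q, hq⟩ := exists_ne (0 : Q)
      have : (S.g γ : A') • D.emb q ∈ U γ := ⟨q, rfl⟩
      rw [hbot, Submodule.mem_bot] at this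
      exact hq (hne γ q this)
    · intro b hb
      by_contra hb0
      obtain ⟨x, hxb, hx0⟩ := Submodule.exists_mem_ne_zero_of_ne_bot hb0
      obtain ⟨q, hq⟩ := (hmem γ x).mp (hb.le hxb)
      have hq0 : q ≠ 0 := fun h => hx0 (by rw [← hq, h, map_zero, smul_zero])
      have hUb : U γ ≤ b := by
        rintro y ⟨q', rfl⟩
        obtain ⟨a, ha⟩ := Submodule.mem_span_singleton.mp
          (by rw [IsSimpleModule.span_singleton_eq_top A hq0]; exact Submodule.mem_top :
            q' ∈ Submodule.span A {q})
        have : (S.ψ γ a) • x = (S.g γ : A') • D.emb q' := by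
          rw [← hq, smul_mem_aux γ (S.ψ γ a) q, S.psi_cancel', ha]
        show (S.g γ : A') • D.emb q' ∈ b
        rw [← this]
        exact b.smul_mem _ hxb
      exact hb.not_ge hUb
  refine isSemisimpleModule_of_isSemisimpleModule_submodule' (p := U) (fun γ => ?_) ?_
  · haveI : IsSimpleModule A ↥(U γ) := isSimpleModule_iff_isAtom.mpr (hatom γ)
    infer_instance
  · rw [eq_top_iff]
    intro x _
    rw [D.dec_spec x]
    exact Submodule.sum_mem _ fun γ _ =>
      Submodule.mem_iSup_of_mem γ ⟨D.dec x γ, rfl⟩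

end IndData
end D
section E
variable {A A' Γ : Type u} [Ring A] [Ring A'] [Algebra ℂ A] [Algebra ℂ A']
  [Group Γ] [Fintype Γ]

/-- Maschke-type theorem: an `A'`-module that is semisimple over `A` is semisimple over the
crossed product `A'`. -/
lemma CPSetting.maschke (S : CPSetting A A' Γ) (M : Type u) [AddCommGroup M] [Module A' M]
    [Module A M] (hcomp : ∀ (a : A) (x : M), a • x = S.ι a • x)
    (hss : IsSemisimpleModule A M) : IsSemisimpleModule A' M := by
  refine (isSemisimpleModule_iff A' M).mpr ⟨?_⟩
  intro U
  let UA : Submodule A M :=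
    { carrier := U
      add_mem' := fun h h' => U.add_mem h h'
      zero_mem' := U.zero_mem
      smul_mem' := fun a x hx => by rw [hcomp]; exact U.smul_mem _ hx }
  obtain ⟨C, hC⟩ := hss.exists_isCompl UA
  let π : M →ₗ[A] UA := Submodule.linearProjOfIsCompl UA C hC
  set s : A' := algebraMap ℂ A' ((Fintype.card Γ : ℂ)⁻¹) with hs
  let t : M → M := fun x => s • ∑ γ : Γ, (S.g γ : A') • ((π ((S.g γ⁻¹ : A') • x) : M))
  have hπ_left : ∀ x : M, x ∈ U → (π x : M) = x := by
    intro x hx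
    exact congrArg Subtype.val (Submodule.linearProjOfIsCompl_apply_left hC ⟨x, hx⟩)
  have tdef : ∀ x : M, t x = s • ∑ γ : Γ, (S.g γ : A') • ((π ((S.g γ⁻¹ : A') • x) : M)) :=
    fun _ => rfl
  have scomm : ∀ (y : A') (m : M), s • y • m = y • s • m := fun y m => by
    rw [smul_smul, smul_smul, hs, Algebra.commutes]
  have ht_mem : ∀ x : M, t x ∈ U :=
    fun x => U.smul_mem s (Submodule.sum_mem U fun γ _ => U.smul_mem _ (π _).2)
  have hcancel : ∀ x : M, s • (∑ _γ : Γ, x) = x := by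
    intro x
    rw [Finset.sum_const, Finset.card_univ, ← Nat.cast_smul_eq_nsmul A' (Fintype.card Γ) x,
      smul_smul]
    have : (Fintype.card Γ : A') = algebraMap ℂ A' (Fintype.card Γ : ℂ) := by
      rw [map_natCast]
    rw [this, hs, ← map_mul, inv_mul_cancel₀ (by exact_mod_cast Fintype.card_ne_zero),
      map_one, one_smul]
  have ht_id : ∀ x ∈ U, t x = x := by
    intro x hx
    have h1 : ∀ γ : Γ, (S.g γ : A') • ((π ((S.g γ⁻¹ : A') • x) : M)) = x := by
      intro γ
      rw [hπ_left _ (U.smul_mem _ hx), S.g_mul_smul, mul_inv_cancel, map_one, Units.val_one,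
        one_smul]
    rw [tdef, Finset.sum_congr rfl fun γ _ => h1 γ]
    exact hcancel x
  have hadd : ∀ x y : M, t (x + y) = t x + t y := by
    intro x y
    rw [tdef, tdef, tdef, ← smul_add, ← Finset.sum_add_distrib]
    congr 1
    refine Finset.sum_congr rfl fun γ _ => ?_
    rw [smul_add, map_add, Submodule.coe_add, smul_add]
  let T : M →+ M := AddMonoidHom.mk' t hadd
  have hπι : ∀ (b : A) (z : M), (π (S.ι b • z) : M) = S.ι b • (π z : M) := by
    intro b z
    rw [← hcomp, map_smul]
    rw [Submodule.coe_smul, hcomp]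
  have hι : ∀ (a : A) (x : M), T (S.ι a • x) = S.ι a • T x := by
    intro a x
    show t (S.ι a • x) = S.ι a • t x
    rw [tdef, tdef, ← scomm]
    congr 1
    rw [Finset.smul_sum]
    refine Finset.sum_congr rfl fun γ _ => ?_
    have e1 : (S.g γ⁻¹ : A') • (S.ι a • x) = S.ι (S.ψ γ⁻¹ a) • ((S.g γ⁻¹ : A') • x) := by
      rw [smul_smul, smul_smul, S.hrel γ⁻¹ a]
    rw [e1, hπι, smul_smul, smul_smul, ← S.comm' γ a]
  have hg : ∀ (δ : Γ) (x : M), T ((S.g δ : A') • x) = (S.g δ : A') • T x := by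
    intro δ x
    show t ((S.g δ : A') • x) = (S.g δ : A') • t x
    rw [tdef, tdef, ← scomm]
    congr 1
    rw [Finset.smul_sum]
    refine Fintype.sum_equiv (Equiv.mulLeft δ⁻¹) _ _ fun γ => ?_
    rw [Equiv.coe_mulLeft, S.g_mul_smul δ (δ⁻¹ * γ), mul_inv_cancel_left, S.g_mul_smul]
    congr 2
    rw [mul_inv_rev, inv_inv, ← S.g_mul_smul]
  let Tlin : M →ₗ[A'] M :=
    { toFun := t
      map_add' := hadd
      map_smul' := fun a' x => S.map_smul_of T hι hg a' x }
  refine ⟨LinearMap.ker Tlin, ?_, ?_⟩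
  · rw [disjoint_iff]
    rw [eq_bot_iff]
    intro x hx
    have hxU : x ∈ U := (Submodule.mem_inf.mp hx).1
    have hxK : Tlin x = 0 := (Submodule.mem_inf.mp hx).2
    have : t x = x := ht_id x hxU
    rw [Submodule.mem_bot, ← this]
    exact hxK
  · rw [codisjoint_iff, eq_top_iff]
    intro x _
    have h1 : t x ∈ U := ht_mem x
    have h2 : x - t x ∈ LinearMap.ker Tlin := by
      rw [LinearMap.mem_ker]
      show t (x - t x) = 0
      have hsub : ∀ u v : M, t (u - v) = t u - t v := by
        intro u v
        have := hadd (u - v) v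
        rw [sub_add_cancel] at this
        rw [eq_sub_of_add_eq this.symm]
      rw [hsub, ht_id _ h1, sub_self]
    have : x = t x + (x - t x) := by abel
    rw [this]
    exact Submodule.add_mem_sup h1 h2
end E
section F
variable {A A' Γ : Type u} [Ring A] [Ring A'] [Algebra ℂ A] [Algebra ℂ A']
  [Group Γ] [Fintype Γ]

namespace CPSetting

variable (S : CPSetting A A' Γ) (M : Type u) [AddCommGroup M] [Module A' M] [Module A M]
  (hcomp : ∀ (a : A) (x : M), a • x = S.ι a • x)

include hcomp in
/-- Translate of an `A`-submodule by the unit `g γ`. -/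
def smulSub (γ : Γ) (W : Submodule A M) : Submodule A M where
  carrier := {x : M | ∃ u ∈ W, (S.g γ : A') • u = x}
  add_mem' := by
    rintro x y ⟨u, hu, hux⟩ ⟨v, hv, hvy⟩
    exact ⟨u + v, W.add_mem hu hv, by rw [smul_add, hux, hvy]⟩
  zero_mem' := ⟨0, W.zero_mem, smul_zero _⟩
  smul_mem' := by
    rintro a x ⟨u, hu, hux⟩
    refine ⟨S.ψ γ⁻¹ a • u, W.smul_mem _ hu, ?_⟩
    rw [← hux, hcomp, hcomp, smul_smul, smul_smul, ← S.comm' γ a]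

variable {M}

lemma mem_smulSub {γ : Γ} {W : Submodule A M} {x : M} :
    x ∈ S.smulSub M hcomp γ W ↔ ∃ u ∈ W, (S.g γ : A') • u = x := Iff.rfl

lemma smulSub_smulSub (γ δ : Γ) (W : Submodule A M) :
    S.smulSub M hcomp γ (S.smulSub M hcomp δ W) = S.smulSub M hcomp (γ * δ) W := by
  ext x
  simp only [mem_smulSub]
  constructor
  · rintro ⟨u, ⟨v, hv, hvu⟩, hux⟩
    exact ⟨v, hv, by rw [← hux, ← hvu, S.g_mul_smul]⟩
  · rintro ⟨v, hv, hvx⟩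
    exact ⟨(S.g δ : A') • v, ⟨v, hv, rfl⟩, by rw [← hvx, S.g_mul_smul]⟩

lemma smulSub_one (W : Submodule A M) : S.smulSub M hcomp 1 W = W := by
  ext x
  simp only [mem_smulSub]
  constructor
  · rintro ⟨u, hu, hux⟩
    rwa [← hux, map_one, Units.val_one, one_smul]
  · intro hx
    exact ⟨x, hx, by rw [map_one, Units.val_one, one_smul]⟩

lemma smulSub_inv (γ : Γ) (W : Submodule A M) :
    S.smulSub M hcomp γ (S.smulSub M hcomp γ⁻¹ W) = W := by
  rw [smulSub_smulSub, mul_inv_cancel, smulSub_one]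

lemma smulSub_inv' (γ : Γ) (W : Submodule A M) :
    S.smulSub M hcomp γ⁻¹ (S.smulSub M hcomp γ W) = W := by
  rw [smulSub_smulSub, inv_mul_cancel, smulSub_one]

lemma smulSub_top (γ : Γ) : S.smulSub M hcomp γ (⊤ : Submodule A M) = ⊤ := by
  apply le_antisymm le_top
  intro x _
  exact ⟨(S.g γ⁻¹ : A') • x, trivial, S.g_cancel γ x⟩

lemma smulSub_mono (γ : Γ) {W W' : Submodule A M} (h : W ≤ W') :
    S.smulSub M hcomp γ W ≤ S.smulSub M hcomp γ W' := by
  rintro x ⟨u, hu, hux⟩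
  exact ⟨u, h hu, hux⟩

lemma smulSub_lt (γ : Γ) {W W' : Submodule A M} (h : W < W') :
    S.smulSub M hcomp γ W < S.smulSub M hcomp γ W' := by
  rcases lt_iff_le_and_ne.mp h with ⟨hle, hne⟩
  refine lt_iff_le_and_ne.mpr ⟨smulSub_mono S hcomp γ hle, ?_⟩
  intro hcon
  apply hne
  rw [← smulSub_inv' S hcomp γ W, hcon, smulSub_inv']

lemma smulSub_coatom {γ : Γ} {W : Submodule A M} (hW : IsCoatom W) :
    IsCoatom (S.smulSub M hcomp γ W) := by
  constructor
  · intro htop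
    apply hW.1
    rw [← smulSub_inv' S hcomp γ W, htop, smulSub_top]
  · intro b hb
    have h1 : W < S.smulSub M hcomp γ⁻¹ b := by
      have := smulSub_lt S hcomp γ⁻¹ hb
      rwa [smulSub_inv'] at this
    have h2 := hW.2 _ h1
    rw [← smulSub_inv S hcomp γ b, h2, smulSub_top]

end CPSetting
end F
section G
variable {A A' Γ : Type u} [Ring A] [Ring A'] [Algebra ℂ A] [Algebra ℂ A']
  [Group Γ] [Fintype Γ]

lemma pi_isSemisimpleModule {R : Type u} [Ring R] {ι : Type u} [Finite ι] (M : ι → Type u)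
    [∀ i, AddCommGroup (M i)] [∀ i, Module R (M i)] (h : ∀ i, IsSemisimpleModule R (M i)) :
    IsSemisimpleModule R (∀ i, M i) := by
  classical
  refine isSemisimpleModule_of_isSemisimpleModule_submodule'
    (p := fun i => LinearMap.range (LinearMap.single R M i)) (fun i => ?_)
    (LinearMap.iSup_range_single (R := R) (φ := M))
  haveI := h i
  exact IsSemisimpleModule.range _

lemma isSemisimple_of_injective {R M N' : Type u} [Ring R] [AddCommGroup M] [Module R M]
    [AddCommGroup N'] [Module R N'] (f : M →ₗ[R] N') (hf : Function.Injective f)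
    (h : IsSemisimpleModule R N') : IsSemisimpleModule R M := by
  haveI := h
  haveI : IsSemisimpleModule R (LinearMap.range f) := inferInstance
  exact IsSemisimpleModule.congr (LinearEquiv.ofInjective f hf)

/-- Clifford-type theorem: a simple module over the crossed product is semisimple over `A`. -/
lemma CPSetting.restrictSemisimple (S : CPSetting A A' Γ) (N : Type u) [AddCommGroup N]
    [Module A' N] [Module A N] (hcomp : ∀ (a : A) (x : N), a • x = S.ι a • x)
    (hN : IsSimpleModule A' N) : IsSemisimpleModule A N := by
  haveI := hN
  haveI : Nontrivial N := IsSimpleModule.nontrivial A' N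
  obtain ⟨n, hn⟩ := exists_ne (0 : N)
  have hfg : (⊤ : Submodule A N).FG := by
    classical
    refine ⟨Finset.image (fun γ => (S.g γ : A') • n) Finset.univ, ?_⟩
    rw [Finset.coe_image, Finset.coe_univ, Set.image_univ, eq_top_iff]
    intro x _
    obtain ⟨a', ha'⟩ := Submodule.mem_span_singleton.mp
      (by rw [IsSimpleModule.span_singleton_eq_top A' hn]; exact Submodule.mem_top :
        x ∈ Submodule.span A' {n})
    obtain ⟨c, hc, -⟩ := S.hbasis a'
    have : x = ∑ γ : Γ, c γ • ((S.g γ : A') • n) := by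
      rw [← ha', hc, Finset.sum_smul]
      exact Finset.sum_congr rfl fun γ _ => by rw [hcomp, mul_smul]
    rw [this]
    exact Submodule.sum_mem _ fun γ _ =>
      Submodule.smul_mem _ _ (Submodule.subset_span (Set.mem_range_self γ))
  haveI := CompleteLattice.coatomic_of_top_compact ((Submodule.fg_iff_compact _).mp hfg)
  obtain ⟨mN, hmN, -⟩ :=
    (eq_top_or_exists_le_coatom (⊥ : Submodule A N)).resolve_left bot_ne_top
  set T : Γ → Submodule A N := fun γ => S.smulSub N hcomp γ mN with hT
  have hTco : ∀ γ, IsCoatom (T γ) := fun γ => S.smulSub_coatom hcomp hmN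
  have hT1 : T 1 = mN := S.smulSub_one hcomp mN
  have hbot : (⨅ γ : Γ, T γ) = ⊥ := by
    let K' : Submodule A' N :=
      { carrier := ↑(⨅ γ : Γ, T γ)
        add_mem' := fun ha hb => Submodule.add_mem _ ha hb
        zero_mem' := Submodule.zero_mem _
        smul_mem' := by
          intro a' x hx
          refine S.smul_induction (fun y => y ∈ (⨅ γ : Γ, T γ)) (Submodule.zero_mem _)
            (fun u v hu hv => Submodule.add_mem _ hu hv)
            (fun a y hy => by rw [← hcomp]; exact Submodule.smul_mem _ a hy)
            (fun δ y hy => ?_) a' x hx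
          simp only [Submodule.mem_iInf] at hy ⊢
          intro γ
          obtain ⟨u, hu, hu2⟩ := (S.mem_smulSub hcomp).mp (hy (δ⁻¹ * γ))
          exact (S.mem_smulSub hcomp).mpr
            ⟨u, hu, by rw [← hu2, S.g_mul_smul, mul_inv_cancel_left]⟩ }
    rcases eq_bot_or_eq_top K' with h | h
    · rw [eq_bot_iff]
      intro x hx
      have : x ∈ K' := hx
      rw [h] at this
      exact this
    · exfalso
      apply hmN.1
      rw [eq_top_iff]
      intro x _
      have hx : x ∈ K' := by rw [h]; trivial
      have := (Submodule.mem_iInf T).mp hx 1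
      rwa [hT1] at this
  let f : N →ₗ[A] (∀ γ : Γ, N ⧸ T γ) := LinearMap.pi fun γ => (T γ).mkQ
  have hker : LinearMap.ker f = ⊥ := by
    rw [LinearMap.ker_pi]
    simp only [Submodule.ker_mkQ]
    exact hbot
  haveI : ∀ γ : Γ, IsSimpleModule A (N ⧸ T γ) :=
    fun γ => isSimpleModule_iff_isCoatom.mpr (hTco γ)
  have hp : ∀ γ : Γ, IsSemisimpleModule A (N ⧸ T γ) := fun γ => inferInstance
  exact isSemisimple_of_injective f (LinearMap.ker_eq_bot.mp hker)
    (pi_isSemisimpleModule (R := A) (fun γ => N ⧸ T γ) hp)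
end G
theorem stmt13
    (A A' : Type u) [Ring A] [Ring A'] [Algebra ℂ A] [Algebra ℂ A']
    (Γ : Type u) [Group Γ] [Fintype Γ]
    (ψ : Γ →* RingAut A) (ι : A →ₐ[ℂ] A') (g : Γ →* A'ˣ)
    (hrel : ∀ (γ : Γ) (a : A), (g γ : A') * ι a = ι (ψ γ a) * (g γ : A'))
    (hbasis : ∀ x : A', ∃! c : Γ → A, x = ∑ γ : Γ, ι (c γ) * (g γ : A'))
    -- any A-module V
    (V : Type u) [AddCommGroup V] [Module A V]
    -- the induced module Ind_A^{Γ⋉A} V, axiomatized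
    (IV : Type u) [AddCommGroup IV] [Module A' IV]
    (emb : V →+ IV)
    (hembA : ∀ (a : A) (v : V), emb (a • v) = ι a • emb v)
    (hIbasis : ∀ x : IV, ∃! c : Γ → V, x = ∑ γ : Γ, (g γ : A') • emb (c γ))
    -- an irreducible A'-module N
    (N : Type u) [AddCommGroup N] [Module A' N] (hN : IsSimpleModule A' N) :
    -- N is an irreducible quotient of Ind V iff N is an irreducible direct summand
    -- of Ind Q for some irreducible quotient Q = V/m of V
    (∃ f : IV →ₗ[A'] N, Function.Surjective f) ↔
    (∃ m : Submodule A V, IsSimpleModule A (V ⧸ m) ∧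
      (∀ (IQ : Type u) [AddCommGroup IQ] [Module A' IQ] (embQ : (V ⧸ m) →+ IQ),
        (∀ (a : A) (q : V ⧸ m), embQ (a • q) = ι a • embQ q) →
        (∀ x : IQ, ∃! c : Γ → (V ⧸ m), x = ∑ γ : Γ, (g γ : A') • embQ (c γ)) →
        ∃ (P P' : Submodule A' IQ), IsCompl P P' ∧ Nonempty (P ≃ₗ[A'] N))) := by
  classical
  set S : CPSetting A A' Γ := ⟨ψ, ι, g, hrel, hbasis⟩ with hS
  let DV : IndData S V IV := ⟨emb, hembA, hIbasis⟩
  haveI := hN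
  haveI : Nontrivial N := IsSimpleModule.nontrivial A' N
  letI : Module A N := Module.compHom N (ι.toRingHom : A →+* A')
  have hcompN : ∀ (a : A) (x : N), a • x = S.ι a • x := fun a x => rfl
  constructor
  · -- forward direction
    rintro ⟨f, hf⟩
    let φ₀ : V →ₗ[A] N :=
      { toFun := fun v => f (emb v)
        map_add' := fun v w => by simp
        map_smul' := fun a v => by
          show f (emb (a • v)) = a • f (emb v)
          rw [hembA, map_smul, hcompN] }
    have hφ0 : ∃ v : V, φ₀ v ≠ 0 := by
      by_contra h
      push_neg at h
      obtain ⟨x0, hx0⟩ := exists_ne (0 : N)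
      obtain ⟨y, hy⟩ := hf x0
      apply hx0
      rw [← hy, DV.dec_spec y, map_sum]
      refine Finset.sum_eq_zero fun γ _ => ?_
      rw [map_smul]
      have : f (DV.emb (DV.dec y γ)) = 0 := h _
      rw [this, smul_zero]
    haveI hssN : IsSemisimpleModule A N := S.restrictSemisimple N hcompN hN
    set W : Submodule A N := LinearMap.range φ₀ with hW
    have hWne : W ≠ ⊥ := by
      obtain ⟨v, hv⟩ := hφ0
      intro hcon
      apply hv
      have : φ₀ v ∈ W := LinearMap.mem_range_self _ v
      rwa [hcon, Submodule.mem_bot] at this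
    obtain ⟨S₀, hS₀atom, hS₀W⟩ := (IsAtomic.eq_bot_or_exists_atom_le W).resolve_left hWne
    haveI hS₀simple : IsSimpleModule A S₀ := isSimpleModule_iff_isAtom.mpr hS₀atom
    obtain ⟨C, hC⟩ := ComplementedLattice.exists_isCompl S₀
    let π : N →ₗ[A] S₀ := Submodule.linearProjOfIsCompl S₀ C hC
    let q0 : V →ₗ[A] S₀ := π.comp φ₀
    have hq0 : Function.Surjective q0 := by
      intro s
      obtain ⟨v, hv⟩ := hS₀W s.2
      refine ⟨v, ?_⟩
      show π (φ₀ v) = s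
      rw [hv]
      exact Submodule.linearProjOfIsCompl_apply_left hC s
    refine ⟨LinearMap.ker q0, ?_, ?_⟩
    · exact IsSimpleModule.congr (q0.quotKerEquivOfSurjective hq0)
    · intro IQ _ _ embQ hembQ hQbasis
      haveI hQsimple : IsSimpleModule A (V ⧸ LinearMap.ker q0) :=
        IsSimpleModule.congr (q0.quotKerEquivOfSurjective hq0)
      letI : Module A IQ := Module.compHom IQ (ι.toRingHom : A →+* A')
      have hcompIQ : ∀ (a : A) (x : IQ), a • x = S.ι a • x := fun a x => rfl
      let D' : IndData S (V ⧸ LinearMap.ker q0) IQ := ⟨embQ, hembQ, hQbasis⟩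
      let e := q0.quotKerEquivOfSurjective hq0
      let ξ : (V ⧸ LinearMap.ker q0) →ₗ[A] N := S₀.subtype.comp e.toLinearMap
      let Φ : IQ →ₗ[A'] N := D'.induce N hcompN ξ
      have hΦsurj : Function.Surjective Φ := by
        haveI := hQsimple.nontrivial
        obtain ⟨q', hq'⟩ := exists_ne (0 : V ⧸ LinearMap.ker q0)
        have hξ : ξ q' ≠ 0 := by
          intro hcon
          apply hq'
          have h2 : e q' = 0 := Subtype.ext hcon
          simpa using congrArg e.symm h2
        rw [← LinearMap.range_eq_top]
        refine (eq_bot_or_eq_top (LinearMap.range Φ)).resolve_left fun hcon => hξ ?_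
        have : Φ (D'.emb q') ∈ LinearMap.range Φ := LinearMap.mem_range_self _ _
        rw [hcon, Submodule.mem_bot, D'.induce_emb] at this
        exact this
      haveI hssIQ : IsSemisimpleModule A IQ := D'.isSemisimpleA hcompIQ hQsimple
      haveI : IsSemisimpleModule A' IQ := S.maschke IQ hcompIQ hssIQ
      obtain ⟨P, hP⟩ := ComplementedLattice.exists_isCompl (LinearMap.ker Φ)
      exact ⟨P, LinearMap.ker Φ, hP.symm,
        ⟨(Submodule.quotientEquivOfIsCompl _ _ hP).symm.trans
          (Φ.quotKerEquivOfSurjective hΦsurj)⟩⟩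
  · -- reverse direction
    rintro ⟨m, hm, hall⟩
    let K : Submodule A' IV :=
      { carrier := {x : IV | ∃ c : Γ → V, (∀ γ, c γ ∈ m) ∧
          x = ∑ γ : Γ, (g γ : A') • emb (c γ)}
        add_mem' := by
          rintro x y ⟨c, hc, rfl⟩ ⟨d, hd, rfl⟩
          exact ⟨c + d, fun γ => m.add_mem (hc γ) (hd γ), by exact DV.sum_add c d⟩
        zero_mem' := ⟨0, fun γ => m.zero_mem, by simp⟩
        smul_mem' := by
          intro a' x hx
          refine S.smul_induction
            (fun y => ∃ c : Γ → V, (∀ γ, c γ ∈ m) ∧ y = ∑ γ : Γ, (g γ : A') • emb (c γ))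
            ⟨0, fun γ => m.zero_mem, by simp⟩ ?_ ?_ ?_ a' x hx
          · rintro u v ⟨c, hc, rfl⟩ ⟨d, hd, rfl⟩
            exact ⟨c + d, fun γ => m.add_mem (hc γ) (hd γ), by exact DV.sum_add c d⟩
          · rintro a u ⟨c, hc, rfl⟩
            exact ⟨fun γ => ψ γ⁻¹ a • c γ, fun γ => m.smul_mem _ (hc γ), by exact DV.smul_ι_sum a c⟩
          · rintro δ u ⟨c, hc, rfl⟩
            exact ⟨fun γ => c (δ⁻¹ * γ), fun γ => hc _, by exact DV.smul_g_sum δ c⟩ }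
    have hmemK : ∀ x : IV, x ∈ K ↔ ∃ c : Γ → V, (∀ γ, c γ ∈ m) ∧
        x = ∑ γ : Γ, (g γ : A') • emb (c γ) := fun x => Iff.rfl
    letI : Module A (IV ⧸ K) := Module.compHom (IV ⧸ K) (ι.toRingHom : A →+* A')
    let fn : V →ₗ[A] (IV ⧸ K) :=
      { toFun := fun v => Submodule.Quotient.mk (emb v)
        map_add' := fun v w => by simp
        map_smul' := fun a v => by
          show Submodule.Quotient.mk (emb (a • v)) = a • Submodule.Quotient.mk (emb v)
          show _ = ι a • Submodule.Quotient.mk (emb v)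
          rw [hembA, ← Submodule.Quotient.mk_smul] }
    have hker : m ≤ LinearMap.ker fn := by
      intro v hv
      rw [LinearMap.mem_ker]
      show Submodule.Quotient.mk (emb v) = 0
      rw [Submodule.Quotient.mk_eq_zero]
      refine (hmemK _).mpr ⟨Pi.single (1 : Γ) v, ?_, by exact (DV.single_sum v).symm⟩
      intro γ
      by_cases hγ : γ = 1
      · subst hγ; simpa using hv
      · rw [Pi.single_eq_of_ne hγ]; exact m.zero_mem
    let embQl : (V ⧸ m) →ₗ[A] (IV ⧸ K) := Submodule.liftQ m fn hker
    have hembQA : ∀ (a : A) (q : V ⧸ m),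
        embQl.toAddMonoidHom (a • q) = ι a • embQl.toAddMonoidHom q := by
      intro a q
      show embQl (a • q) = ι a • embQl q
      rw [map_smul]
      rfl
    have hmk_sum : ∀ d : Γ → V,
        (Submodule.Quotient.mk (∑ γ : Γ, (g γ : A') • emb (d γ)) : IV ⧸ K)
          = ∑ γ : Γ, (g γ : A') • embQl.toAddMonoidHom (Submodule.Quotient.mk (d γ)) := by
      intro d
      rw [show (Submodule.Quotient.mk (∑ γ : Γ, (g γ : A') • emb (d γ)) : IV ⧸ K)
          = K.mkQ (∑ γ : Γ, (g γ : A') • emb (d γ)) from rfl, map_sum]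
      refine Finset.sum_congr rfl fun γ _ => ?_
      rw [map_smul]
      rfl
    have hQbasis : ∀ x : IV ⧸ K, ∃! c : Γ → (V ⧸ m),
        x = ∑ γ : Γ, (g γ : A') • embQl.toAddMonoidHom (c γ) := by
      intro x
      obtain ⟨y, rfl⟩ := Submodule.Quotient.mk_surjective K x
      refine ⟨fun γ => Submodule.Quotient.mk (DV.dec y γ), ?_, ?_⟩
      · show (Submodule.Quotient.mk y : IV ⧸ K) = _
        conv_lhs => rw [DV.dec_spec y]
        exact hmk_sum (DV.dec y)
      · intro c hc
        have lift : ∀ γ : Γ, ∃ v : V, Submodule.Quotient.mk v = c γ :=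
          fun γ => Submodule.Quotient.mk_surjective m (c γ)
        choose cv hcv using lift
        have h1 : (Submodule.Quotient.mk y : IV ⧸ K)
            = Submodule.Quotient.mk (∑ γ : Γ, (g γ : A') • emb (cv γ)) := by
          rw [hmk_sum cv, hc]
          refine Finset.sum_congr rfl fun γ _ => by rw [hcv]
        have h2 : y - ∑ γ : Γ, (g γ : A') • emb (cv γ) ∈ K :=
          (Submodule.Quotient.eq K).mp h1
        obtain ⟨w, hw, hwe⟩ := (hmemK _).mp h2
        have h3 : y = ∑ γ : Γ, (g γ : A') • emb (w γ + cv γ) := by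
          rw [← DV.sum_add, ← hwe, sub_add_cancel]
        have h4 : DV.dec y = fun γ => w γ + cv γ := DV.dec_eq h3
        funext γ
        show c γ = Submodule.Quotient.mk (DV.dec y γ)
        rw [← hcv γ, h4]
        show (Submodule.Quotient.mk (cv γ) : V ⧸ m) = Submodule.Quotient.mk (w γ + cv γ)
        rw [Submodule.Quotient.eq]
        have : cv γ - (w γ + cv γ) = -w γ := by abel
        rw [this]
        exact m.neg_mem (hw γ)
    obtain ⟨P, P', hPP', ⟨e⟩⟩ := hall (IV ⧸ K) embQl.toAddMonoidHom hembQA hQbasis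
    refine ⟨e.toLinearMap.comp ((Submodule.projectionOnto P P' hPP').comp K.mkQ), ?_⟩
    intro n
    obtain ⟨y, hy⟩ := Submodule.Quotient.mk_surjective K ((e.symm n : P) : IV ⧸ K)
    refine ⟨y, ?_⟩
    show e ((Submodule.projectionOnto P P' hPP') (K.mkQ y)) = n
    rw [show K.mkQ y = Submodule.Quotient.mk y from rfl, hy,
      Submodule.projectionOnto_apply_left hPP' (e.symm n)]
    simp
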